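/- For all complex-valued multiplicative characters A, B, B', C, C' of a finite field F_q with q elements and all x, y ∈ F_q, one has F₂(A;B,B';C,C';x,y) = (1/(q-1)²)·Σ_{χ,λ} {Aχ choose χ}·{Aχλ choose λ}·{Bχ choose Cχ}·{B'λ choose C'λ}·χ(x)·λ(y) + Ā(-x)·C̄'(y)·(B̄'C')(1-y)·{ĀB choose BC̄}, where both sums run over all multiplicative characters of F_q. -/

import Mathlib

open Finset

noncomputable instance {F : Type*} [Field F] [Fintype F] : Fintype (MulChar F ℂ) :=
  Fintype.ofFinite _

/-- Finite-field binomial coefficient `{A choose B} = B(-1) · J(A, B̄)`,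
where `J(χ,λ) = ∑_u χ(u)·λ(1-u)` is the Jacobi sum. -/
noncomputable def binom {F : Type*} [Field F] [Fintype F] (A B : MulChar F ℂ) : ℂ :=
  B (-1) * ∑ u : F, A u * B⁻¹ (1 - u)

/-- Finite-field Gauss hypergeometric series
`₂F₁(A,B;C|x) = ε(x)·(BC)(-1)·∑_y B(y)·(B̄C)(1-y)·Ā(1-xy)`. -/
noncomputable def gauss2F1 {F : Type*} [Field F] [Fintype F]
    (A B C : MulChar F ℂ) (x : F) : ℂ :=
  (1 : MulChar F ℂ) x * (B * C) (-1) *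
    ∑ y : F, B y * (B⁻¹ * C) (1 - y) * A⁻¹ (1 - x * y)

/-- Finite-field `₃F₂` hypergeometric series. -/
noncomputable def hyper3F2 {F : Type*} [Field F] [Fintype F]
    (A₀ A₁ A₂ B₁ B₂ : MulChar F ℂ) (x : F) : ℂ :=
  ((Fintype.card F : ℂ) - 1)⁻¹ *
    ∑ χ : MulChar F ℂ,
      binom (A₀ * χ) χ * binom (A₁ * χ) (B₁ * χ) * binom (A₂ * χ) (B₂ * χ) * χ x

/-- Finite-field Appell series
`F₂(A;B,B';C,C';x,y) = ε(xy)·(BB'CC')(-1)·∑_{u,v} B(u)B'(v)(B̄C)(1-u)(B̄'C')(1-v)·Ā(1-ux-vy)`. -/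
noncomputable def appellF2 {F : Type*} [Field F] [Fintype F]
    (A B B' C C' : MulChar F ℂ) (x y : F) : ℂ :=
  (1 : MulChar F ℂ) (x * y) * (B * B' * C * C') (-1) *
    ∑ u : F, ∑ v : F,
      B u * B' v * (B⁻¹ * C) (1 - u) * (B'⁻¹ * C') (1 - v) * A⁻¹ (1 - u * x - v * y)

open scoped Classical in
/-- `δ(x) = 1` if `x = 0`, and `0` otherwise. -/
noncomputable def deltaF {F : Type*} [Field F] (x : F) : ℂ :=
  if x = 0 then 1 else 0

open scoped Classical in
/-- `δ(χ) = 1` if `χ = ε` (the trivial character), and `0` otherwise. -/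
noncomputable def deltaChar {F : Type*} [Field F] [Fintype F] (χ : MulChar F ℂ) : ℂ :=
  if χ = 1 then 1 else 0

namespace AF2

open scoped Classical

set_option linter.unusedSectionVars false

variable {F : Type*} [Field F] [Fintype F]

local notation "q1" => ((Fintype.card F : ℂ) - 1)

lemma map_zero'' (χ : MulChar F ℂ) : χ (0 : F) = 0 := χ.map_nonunit (by simp)

lemma hq1' : ((Fintype.card F : ℂ) - 1) ≠ 0 := by
  have h : (1 : ℕ) < Fintype.card F := Fintype.one_lt_card
  have h2 : ((Fintype.card F : ℕ) : ℂ) ≠ 1 := by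
    exact_mod_cast (by omega : Fintype.card F ≠ 1)
  simpa [sub_eq_zero] using h2

instance : HasEnoughRootsOfUnity ℂ (Monoid.exponent Fˣ) := by
  have : NeZero ((Monoid.exponent Fˣ : ℕ) : ℂ) :=
    ⟨by exact_mod_cast Monoid.exponent_ne_zero_of_finite⟩
  infer_instance

lemma card_mulChar : ((Fintype.card (MulChar F ℂ) : ℂ)) = q1 := by
  have h1 : Nat.card (MulChar F ℂ) = Nat.card Fˣ :=
    MulChar.card_eq_card_units_of_hasEnoughRootsOfUnity F ℂ
  have h2 : Nat.card Fˣ = Fintype.card F - 1 := by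
    rw [Nat.card_eq_fintype_card, Fintype.card_units]
  have h3 : Fintype.card (MulChar F ℂ) = Fintype.card F - 1 := by
    rw [← Nat.card_eq_fintype_card, h1, h2]
  rw [h3, Nat.cast_sub Fintype.card_pos, Nat.cast_one]

lemma sum_chars' (a : F) :
    ∑ χ : MulChar F ℂ, χ a = if a = 1 then q1 else 0 := by
  by_cases ha : a = 1
  · rw [if_pos ha, ha]
    simp only [MulChar.map_one]
    rw [Finset.sum_const, Finset.card_univ, nsmul_eq_mul, mul_one, card_mulChar]
  · rw [if_neg ha]
    by_cases h0 : a = 0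
    · simp [h0, map_zero'']
    · obtain ⟨χ₀, hχ₀⟩ := MulChar.exists_apply_ne_one_of_hasEnoughRootsOfUnity F ℂ ha
      have key : χ₀ a * ∑ χ : MulChar F ℂ, χ a = ∑ χ : MulChar F ℂ, χ a := by
        rw [Finset.mul_sum]
        exact Fintype.sum_equiv (Equiv.mulLeft χ₀) _ _
          (fun χ => by simp [MulChar.mul_apply])
      have h4 : (χ₀ a - 1) * ∑ χ : MulChar F ℂ, χ a = 0 := by
        rw [sub_mul, one_mul, key, sub_self]
      rcases mul_eq_zero.mp h4 with h | h
      · exact absurd (sub_eq_zero.mp h) hχ₀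
      · exact h

lemma sum_F' (χ : MulChar F ℂ) :
    ∑ a : F, χ a = if χ = 1 then q1 else 0 := by
  by_cases hχ : χ = 1
  · rw [if_pos hχ, hχ]
    have h1 : ∀ a : F, (1 : MulChar F ℂ) a = if a = 0 then 0 else 1 := by
      intro a
      by_cases h : a = 0
      · simp [h, map_zero'']
      · rw [if_neg h, MulChar.one_apply (isUnit_iff_ne_zero.mpr h)]
    calc ∑ a : F, (1 : MulChar F ℂ) a
        = ∑ a : F, ((1 : ℂ) - if a = 0 then 1 else 0) := by
          refine Finset.sum_congr rfl fun a _ => ?_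
          rw [h1 a]; split <;> ring
      _ = q1 := by
          rw [Finset.sum_sub_distrib, Finset.sum_const, Finset.sum_ite_eq' Finset.univ (0 : F)]
          simp
  · rw [if_neg hχ]
    exact MulChar.sum_eq_zero_of_ne_one hχ


lemma lem_orth2' (a s : F) :
    ∑ χ : MulChar F ℂ, χ⁻¹ a * χ s = if a = s ∧ s ≠ 0 then q1 else 0 := by
  by_cases h0 : a = 0
  · rw [if_neg (by rintro ⟨rfl, hs⟩; exact hs h0)]
    subst h0
    have hz : ∀ χ : MulChar F ℂ, χ⁻¹ (0 : F) * χ s = 0 := fun χ => by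
      rw [map_zero'', zero_mul]
    simp only [hz, Finset.sum_const_zero]
  · have key : ∀ χ : MulChar F ℂ, χ⁻¹ a * χ s = χ (a⁻¹ * s) := by
      intro χ
      rw [MulChar.inv_apply', map_mul]
    simp only [key]
    rw [sum_chars' (F := F) (a⁻¹ * s)]
    congr 1
    apply propext
    constructor
    · intro h
      have hs : s ≠ 0 := by
        intro hs; rw [hs, mul_zero] at h; exact one_ne_zero h.symm
      refine ⟨?_, hs⟩
      field_simp at h
      exact h.symm
    · rintro ⟨rfl, hs⟩
      field_simp

lemma lem1' (f : F → ℂ) (s : F) (hs : s ≠ 0) :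
    ((Fintype.card F : ℂ) - 1)⁻¹ *
      ∑ χ : MulChar F ℂ, (∑ a : F, f a * χ⁻¹ a) * χ s = f s := by
  have step : ∑ χ : MulChar F ℂ, (∑ a : F, f a * χ⁻¹ a) * χ s = f s * q1 := by
    calc ∑ χ : MulChar F ℂ, (∑ a : F, f a * χ⁻¹ a) * χ s
        = ∑ χ : MulChar F ℂ, ∑ a : F, f a * (χ⁻¹ a * χ s) := by
          simp only [Finset.sum_mul, mul_assoc]
      _ = ∑ a : F, ∑ χ : MulChar F ℂ, f a * (χ⁻¹ a * χ s) := Finset.sum_comm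
      _ = ∑ a : F, f a * ∑ χ : MulChar F ℂ, χ⁻¹ a * χ s := by
          simp only [← Finset.mul_sum]
      _ = ∑ a : F, f a * (if a = s ∧ s ≠ 0 then q1 else 0) := by
          simp only [lem_orth2']
      _ = ∑ a : F, (if a = s then f a * q1 else 0) := by
          refine Finset.sum_congr rfl fun a _ => ?_
          by_cases h : a = s <;> simp [h, hs]
      _ = f s * q1 := by rw [Finset.sum_ite_eq' Finset.univ s]; simp
  rw [step]
  rw [mul_comm (f s) _, ← mul_assoc, inv_mul_cancel₀ hq1', one_mul]

lemma lemM' (f h : F → ℂ) (y : F) (hy : y ≠ 0) (h0 : h 0 = 0) :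
    ∑ v : F, h v * f (v * y)
      = ((Fintype.card F : ℂ) - 1)⁻¹ *
          ∑ lam : MulChar F ℂ,
            (∑ b : F, f b * lam⁻¹ b) * ((∑ v : F, h v * lam v) * lam y) := by
  have step : ∑ lam : MulChar F ℂ, (∑ b : F, f b * lam⁻¹ b) * ((∑ v : F, h v * lam v) * lam y)
      = ∑ v : F, h v * ∑ lam : MulChar F ℂ, (∑ b : F, f b * lam⁻¹ b) * lam (v * y) := by
    calc ∑ lam : MulChar F ℂ, (∑ b : F, f b * lam⁻¹ b) * ((∑ v : F, h v * lam v) * lam y)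
        = ∑ lam : MulChar F ℂ, ∑ v : F, h v * ((∑ b : F, f b * lam⁻¹ b) * lam (v * y)) := by
          refine Finset.sum_congr rfl fun lam _ => ?_
          have e1 : (∑ v : F, h v * lam v) * ((∑ b : F, f b * lam⁻¹ b) * lam y)
              = ∑ v : F, h v * ((∑ b : F, f b * lam⁻¹ b) * lam (v * y)) := by
            rw [Finset.sum_mul]
            exact Finset.sum_congr rfl fun v _ => by rw [map_mul]; ring
          rw [← e1]; ring
      _ = ∑ v : F, ∑ lam : MulChar F ℂ, h v * ((∑ b : F, f b * lam⁻¹ b) * lam (v * y)) :=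
          Finset.sum_comm
      _ = _ := by simp only [← Finset.mul_sum]
  rw [step, Finset.mul_sum]
  refine Finset.sum_congr rfl fun v _ => ?_
  by_cases hv : v = 0
  · rw [hv, h0, zero_mul, mul_comm, mul_assoc]
    simp
  · rw [← mul_assoc, mul_comm (((Fintype.card F : ℂ) - 1)⁻¹) (h v), mul_assoc,
      lem1' f (v * y) (mul_ne_zero hv hy)]


/-- J(α,β) as notation -/
noncomputable def J (α β : MulChar F ℂ) : ℂ := ∑ u : F, α u * β (1 - u)

lemma jsymm (α β : MulChar F ℂ) : J α β = J β α := by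
  unfold J
  refine Fintype.sum_equiv (Equiv.subLeft (1 : F)) _ _ fun u => ?_
  simp only [Equiv.subLeft_apply]
  rw [sub_sub_cancel]
  ring

lemma inv_neg_one' (χ : MulChar F ℂ) : χ⁻¹ (-1 : F) = χ (-1 : F) := by
  rw [MulChar.inv_apply']
  norm_num

lemma neg_one_sq'' (χ : MulChar F ℂ) : χ (-1 : F) * χ (-1 : F) = 1 := by
  rw [← map_mul]
  norm_num

lemma mul_inv_self_apply (β : MulChar F ℂ) {u : F} (hu : u ≠ 0) : β u * β⁻¹ u = 1 := by
  rw [← MulChar.mul_apply, mul_inv_cancel]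
  exact MulChar.one_apply (isUnit_iff_ne_zero.mpr hu)

lemma jtrans (α β : MulChar F ℂ) : J α β = β (-1 : F) * J (α * β)⁻¹ β := by
  unfold J
  rw [Finset.mul_sum]
  refine (Fintype.sum_bijective (fun u : F => u⁻¹) inv_involutive.bijective
    (fun u => β (-1 : F) * ((α * β)⁻¹ u * β (1 - u)))
    (fun u => α u * β (1 - u)) fun u => ?_).symm
  by_cases hu : u = 0
  · subst hu
    simp [map_zero'']
  · rw [← MulChar.inv_apply' α u,
      show (1 : F) - u⁻¹ = (-1) * (1 - u) * u⁻¹ from by field_simp; ring,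
      map_mul β, map_mul β, ← MulChar.inv_apply' β u,
      show (α * β)⁻¹ u = α⁻¹ u * β⁻¹ u from by rw [mul_inv, MulChar.mul_apply]]
    ring

lemma lemScale' (α β : MulChar F ℂ) (w : F) (hw : w ≠ 0) :
    ∑ a : F, β a * α (w - a) = α w * β w * ∑ a : F, β a * α (1 - a) := by
  rw [Finset.mul_sum]
  refine (Fintype.sum_bijective (fun a : F => w * a) (mulLeft_bijective₀ w hw)
    (fun a => α w * β w * (β a * α (1 - a)))
    (fun b => β b * α (w - b)) fun a => ?_).symm
  rw [show w - w * a = w * (1 - a) from by ring, map_mul, map_mul]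
  ring

lemma lemZero' (α β : MulChar F ℂ) :
    ∑ a : F, β a * α ((0 : F) - a)
      = α (-1 : F) * (if α * β = 1 then q1 else 0) := by
  have key : ∀ a : F, β a * α ((0 : F) - a) = α (-1 : F) * (α * β) a := by
    intro a
    rw [show (0 : F) - a = -1 * a by ring, map_mul, MulChar.mul_apply]
    ring
  simp only [key, ← Finset.mul_sum]
  rw [sum_F']

/-- binom (A*χ) χ = J χ⁻¹ A⁻¹ -/
lemma binom_eq1J (A χ : MulChar F ℂ) : binom (A * χ) χ = J χ⁻¹ A⁻¹ := by
  have h : binom (A * χ) χ = χ (-1 : F) * J (A * χ) χ⁻¹ := rfl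
  rw [h, jtrans (A * χ) χ⁻¹]
  rw [show A * χ * χ⁻¹ = A from mul_inv_cancel_right A χ]
  rw [inv_neg_one', ← mul_assoc, neg_one_sq'', one_mul, jsymm]

/-- binom α β = J (α⁻¹ * β) β⁻¹ -/
lemma binom_eq2J (α β : MulChar F ℂ) : binom α β = J (α⁻¹ * β) β⁻¹ := by
  have h : binom α β = β (-1 : F) * J α β⁻¹ := rfl
  rw [h, jtrans α β⁻¹]
  rw [show (α * β⁻¹)⁻¹ = α⁻¹ * β from by rw [mul_inv, inv_inv]]
  rw [inv_neg_one', ← mul_assoc, neg_one_sq'', one_mul]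

/-- J (B*χ) (B⁻¹*C) = (B⁻¹*C)(-1) * binom (B*χ) (C*χ) -/
lemma binom_eq3' (B C χ : MulChar F ℂ) :
    J (B * χ) (B⁻¹ * C) = (B⁻¹ * C) (-1 : F) * binom (B * χ) (C * χ) := by
  rw [jtrans (B * χ) (B⁻¹ * C)]
  rw [show B * χ * (B⁻¹ * C) = C * χ from by rw [mul_comm B χ, mul_assoc, mul_inv_cancel_left, mul_comm]]
  congr 1
  rw [binom_eq2J (B * χ) (C * χ)]
  rw [show (B * χ)⁻¹ * (C * χ) = B⁻¹ * C from by rw [mul_inv, mul_assoc, mul_comm C χ, inv_mul_cancel_left]]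
  rw [jsymm]

/-- the extra-term binomial identity -/
lemma binom_eq4' (A B C : MulChar F ℂ) :
    binom (B * A⁻¹) (C * A⁻¹) = binom (A⁻¹ * B) (B * C⁻¹) := by
  rw [binom_eq2J, binom_eq2J,
    show (B * A⁻¹)⁻¹ * (C * A⁻¹) = B⁻¹ * C from by
      rw [mul_inv, inv_inv, mul_assoc, mul_comm C A⁻¹, mul_inv_cancel_left],
    show (A⁻¹ * B)⁻¹ * (B * C⁻¹) = A * C⁻¹ from by
      rw [mul_inv, inv_inv, mul_assoc, inv_mul_cancel_left],
    show (C * A⁻¹)⁻¹ = A * C⁻¹ from by rw [mul_inv, inv_inv, mul_comm],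
    show (B * C⁻¹)⁻¹ = B⁻¹ * C from by rw [mul_inv, inv_inv],
    jsymm]



lemma binom_eq1' (A χ : MulChar F ℂ) :
    binom (A * χ) χ = ∑ u : F, χ⁻¹ u * A⁻¹ (1 - u) := by
  rw [binom_eq1J]; rfl

lemma binom_eq2' (α β : MulChar F ℂ) :
    binom α β = ∑ u : F, (α⁻¹ * β) u * β⁻¹ (1 - u) := by
  rw [binom_eq2J]; rfl

lemma binom_eq3'' (B C χ : MulChar F ℂ) :
    ∑ u : F, (B * χ) u * (B⁻¹ * C) (1 - u) = (B⁻¹ * C) (-1 : F) * binom (B * χ) (C * χ) := by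
  rw [show (∑ u : F, (B * χ) u * (B⁻¹ * C) (1 - u)) = J (B * χ) (B⁻¹ * C) from rfl]
  exact binom_eq3' B C χ


/-- the coefficient identity -/
lemma c_eq' (A χ lam : MulChar F ℂ) :
    (∑ b : F, lam⁻¹ b * ∑ a : F, A⁻¹ (1 - a - b) * χ⁻¹ a)
      = binom (A * χ) χ * binom (A * χ * lam) lam
        + A (-1 : F) * (if χ = A⁻¹ then q1 else 0) := by
  have hcond : (A⁻¹ * χ⁻¹ = 1) = (χ = A⁻¹) := by
    apply propext
    constructor
    · intro h
      have h2 : (A * χ)⁻¹ = 1 := by rw [mul_inv]; exact h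
      have h3 : A * χ = 1 := inv_eq_one.mp h2
      calc χ = A⁻¹ * A * χ := by rw [inv_mul_cancel, one_mul]
        _ = A⁻¹ * (A * χ) := by rw [mul_assoc]
        _ = A⁻¹ := by rw [h3, mul_one]
    · rintro rfl
      rw [inv_inv, inv_mul_cancel]
  have h1 : ∀ b : F, (∑ a : F, A⁻¹ (1 - a - b) * χ⁻¹ a) = ∑ a : F, χ⁻¹ a * A⁻¹ (1 - b - a) :=
    fun b => Finset.sum_congr rfl fun a _ => by
      rw [show (1 : F) - a - b = 1 - b - a from by ring]; ring
  have h2 : ∀ b : F,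
      lam⁻¹ b * ∑ a : F, χ⁻¹ a * A⁻¹ (1 - b - a)
        = lam⁻¹ b * ((A * χ)⁻¹ (1 - b) * ∑ a : F, χ⁻¹ a * A⁻¹ (1 - a))
          + (if b = 1 then A (-1 : F) * (if χ = A⁻¹ then q1 else 0) else 0) := by
    intro b
    by_cases hb : b = 1
    · subst hb
      rw [if_pos rfl, sub_self]
      rw [show ∑ a : F, χ⁻¹ a * A⁻¹ ((0:F) - a)
            = A⁻¹ (-1 : F) * (if A⁻¹ * χ⁻¹ = 1 then q1 else 0) from lemZero' A⁻¹ χ⁻¹]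
      rw [map_zero'' ((A * χ)⁻¹), MulChar.map_one, inv_neg_one']
      simp only [hcond]
      ring
    · rw [if_neg hb, add_zero]
      congr 1
      have hw : (1 : F) - b ≠ 0 := sub_ne_zero.mpr fun h => hb h.symm
      rw [show (∑ a : F, χ⁻¹ a * A⁻¹ (1 - b - a))
            = A⁻¹ (1 - b) * χ⁻¹ (1 - b) * ∑ a : F, χ⁻¹ a * A⁻¹ (1 - a) from
        lemScale' A⁻¹ χ⁻¹ ((1:F) - b) hw]
      rw [show (A * χ)⁻¹ ((1:F) - b) = A⁻¹ ((1:F) - b) * χ⁻¹ ((1:F) - b) from by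
        rw [mul_inv, MulChar.mul_apply]]
  calc ∑ b : F, lam⁻¹ b * ∑ a : F, A⁻¹ (1 - a - b) * χ⁻¹ a
      = ∑ b : F, (lam⁻¹ b * ((A * χ)⁻¹ (1 - b) * ∑ a : F, χ⁻¹ a * A⁻¹ (1 - a))
          + (if b = 1 then A (-1 : F) * (if χ = A⁻¹ then q1 else 0) else 0)) := by
        refine Finset.sum_congr rfl fun b _ => ?_
        rw [h1 b, h2 b]
    _ = (∑ b : F, lam⁻¹ b * ((A * χ)⁻¹ (1 - b) * ∑ a : F, χ⁻¹ a * A⁻¹ (1 - a)))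
          + ∑ b : F, (if b = 1 then A (-1 : F) * (if χ = A⁻¹ then q1 else 0) else 0) :=
        Finset.sum_add_distrib
    _ = binom (A * χ) χ * binom (A * χ * lam) lam
          + A (-1 : F) * (if χ = A⁻¹ then q1 else 0) := by
        rw [Finset.sum_ite_eq' Finset.univ (1 : F)]
        simp only [Finset.mem_univ, if_true]
        congr 1
        rw [binom_eq1' A χ, show binom (A * χ * lam) lam
            = ∑ b : F, lam⁻¹ b * (A * χ)⁻¹ (1 - b) from binom_eq1' (A * χ) lam]
        calc ∑ b : F, lam⁻¹ b * ((A * χ)⁻¹ (1 - b) * ∑ a : F, χ⁻¹ a * A⁻¹ (1 - a))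
            = ∑ b : F, ∑ a : F, χ⁻¹ a * A⁻¹ (1 - a) * (lam⁻¹ b * (A * χ)⁻¹ (1 - b)) := by
              refine Finset.sum_congr rfl fun b _ => ?_
              rw [Finset.mul_sum, Finset.mul_sum]
              exact Finset.sum_congr rfl fun a _ => by ring
          _ = ∑ a : F, ∑ b : F, χ⁻¹ a * A⁻¹ (1 - a) * (lam⁻¹ b * (A * χ)⁻¹ (1 - b)) :=
              Finset.sum_comm
          _ = (∑ u : F, χ⁻¹ u * A⁻¹ (1 - u)) * ∑ b : F, lam⁻¹ b * (A * χ)⁻¹ (1 - b) := by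
              rw [Finset.sum_mul]
              exact Finset.sum_congr rfl fun a _ => by rw [Finset.mul_sum]

/-- the lambda sum for the correction term -/
lemma sumD' (B' C' : MulChar F ℂ) (y : F) :
    ∑ lam : MulChar F ℂ, binom (B' * lam) (C' * lam) * lam y
      = q1 * (C'⁻¹ y * (B'⁻¹ * C') (1 - y)) := by
  have hb : ∀ lam : MulChar F ℂ, binom (B' * lam) (C' * lam)
      = ∑ v : F, (B'⁻¹ * C') v * (C'⁻¹ (1 - v) * lam⁻¹ (1 - v)) := by
    intro lam
    rw [binom_eq2', show (B' * lam)⁻¹ * (C' * lam) = B'⁻¹ * C' from by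
      rw [mul_inv, mul_assoc, mul_comm C' lam, inv_mul_cancel_left]]
    refine Finset.sum_congr rfl fun v _ => ?_
    rw [show (C' * lam)⁻¹ (1 - v) = C'⁻¹ (1 - v) * lam⁻¹ (1 - v) from by
      rw [mul_inv, MulChar.mul_apply]]
  calc ∑ lam : MulChar F ℂ, binom (B' * lam) (C' * lam) * lam y
      = ∑ lam : MulChar F ℂ, ∑ v : F,
          ((B'⁻¹ * C') v * C'⁻¹ (1 - v)) * (lam⁻¹ (1 - v) * lam y) := by
        refine Finset.sum_congr rfl fun lam _ => ?_
        rw [hb lam, Finset.sum_mul]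
        exact Finset.sum_congr rfl fun v _ => by ring
    _ = ∑ v : F, ((B'⁻¹ * C') v * C'⁻¹ (1 - v)) *
          ∑ lam : MulChar F ℂ, lam⁻¹ (1 - v) * lam y := by
        rw [Finset.sum_comm]
        exact Finset.sum_congr rfl fun v _ => by rw [Finset.mul_sum]
    _ = ∑ v : F, ((B'⁻¹ * C') v * C'⁻¹ (1 - v)) *
          (if 1 - v = y ∧ y ≠ 0 then q1 else 0) := by
        simp only [lem_orth2']
    _ = q1 * (C'⁻¹ y * (B'⁻¹ * C') (1 - y)) := by
        by_cases hy : y = 0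
        · subst hy
          simp only [ne_eq, not_true_eq_false, and_false, if_false, mul_zero,
            Finset.sum_const_zero, map_zero'']
          ring
        · have hiff : ∀ v : F, (1 - v = y ∧ y ≠ 0) = (v = 1 - y) := by
            intro v
            apply propext
            constructor
            · rintro ⟨h, _⟩; rw [← h]; ring
            · rintro rfl; exact ⟨by ring, hy⟩
          simp only [hiff]
          rw [show (∑ v : F, ((B'⁻¹ * C') v * C'⁻¹ (1 - v)) * (if v = 1 - y then q1 else 0))
              = ∑ v : F, (if v = 1 - y then ((B'⁻¹ * C') v * C'⁻¹ (1 - v)) * q1 else 0) from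
            Finset.sum_congr rfl fun v _ => by split <;> simp]
          rw [Finset.sum_ite_eq' Finset.univ (1 - y : F)]
          simp only [Finset.mem_univ, if_true, sub_sub_cancel]
          ring

/-- Jacobi-sum-with-character rewrite -/
lemma Jg_eq' (B C χ : MulChar F ℂ) :
    ∑ v : F, (B v * (B⁻¹ * C) (1 - v)) * χ v
      = (B⁻¹ * C) (-1 : F) * binom (B * χ) (C * χ) := by
  rw [← binom_eq3'']
  exact Finset.sum_congr rfl fun v _ => by rw [MulChar.mul_apply B χ]; ring

lemma const_one' (B B' C C' : MulChar F ℂ) :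
    (B * B' * C * C') (-1 : F) * (B⁻¹ * C) (-1 : F) * (B'⁻¹ * C') (-1 : F) = 1 := by
  simp only [MulChar.mul_apply, inv_neg_one']
  calc B (-1:F) * B' (-1:F) * C (-1:F) * C' (-1:F) * (B (-1:F) * C (-1:F))
        * (B' (-1:F) * C' (-1:F))
      = (B (-1:F) * B (-1:F)) * ((B' (-1:F) * B' (-1:F)) * ((C (-1:F) * C (-1:F))
          * (C' (-1:F) * C' (-1:F)))) := by ring
    _ = 1 := by rw [neg_one_sq'', neg_one_sq'', neg_one_sq'', neg_one_sq'']; norm_num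

lemma pushA' {ι κ : Type*} [Fintype ι] [Fintype κ] (c : ℂ) (G : ι → ℂ)
    (S : ι → κ → ℂ) (T : κ → ℂ) :
    ∑ u : ι, G u * (c * ∑ t : κ, S u t * T t)
      = c * ∑ t : κ, T t * ∑ u : ι, G u * S u t := by
  calc ∑ u : ι, G u * (c * ∑ t : κ, S u t * T t)
      = ∑ u : ι, ∑ t : κ, c * (T t * (G u * S u t)) := by
        refine Finset.sum_congr rfl fun u _ => ?_
        rw [Finset.mul_sum, Finset.mul_sum]
        exact Finset.sum_congr rfl fun t _ => by ring
    _ = ∑ t : κ, ∑ u : ι, c * (T t * (G u * S u t)) := Finset.sum_comm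
    _ = c * ∑ t : κ, T t * ∑ u : ι, G u * S u t := by
        rw [Finset.mul_sum]
        refine Finset.sum_congr rfl fun t _ => ?_
        rw [Finset.mul_sum, Finset.mul_sum]

lemma pushB' {ι κ : Type*} [Fintype ι] [Fintype κ] (G : ι → ℂ) (f : ι → κ → ℂ) (L : κ → ℂ) :
    ∑ u : ι, G u * ∑ b : κ, f u b * L b = ∑ b : κ, L b * ∑ u : ι, G u * f u b := by
  calc ∑ u : ι, G u * ∑ b : κ, f u b * L b
      = ∑ u : ι, ∑ b : κ, L b * (G u * f u b) := by
        refine Finset.sum_congr rfl fun u _ => ?_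
        rw [Finset.mul_sum]
        exact Finset.sum_congr rfl fun b _ => by ring
    _ = ∑ b : κ, ∑ u : ι, L b * (G u * f u b) := Finset.sum_comm
    _ = ∑ b : κ, L b * ∑ u : ι, G u * f u b := by
        exact Finset.sum_congr rfl fun b _ => by rw [Finset.mul_sum]

lemma pushD' {ι κ : Type*} [Fintype ι] [Fintype κ] (c : ℂ) (T : ι → ℂ)
    (W : κ → ℂ) (M : κ → ι → ℂ) :
    ∑ t : ι, T t * (c * ∑ s : κ, W s * M s t)
      = c * ∑ s : κ, ∑ t : ι, W s * T t * M s t := by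
  calc ∑ t : ι, T t * (c * ∑ s : κ, W s * M s t)
      = ∑ t : ι, ∑ s : κ, c * (W s * T t * M s t) := by
        refine Finset.sum_congr rfl fun t _ => ?_
        rw [Finset.mul_sum, Finset.mul_sum]
        exact Finset.sum_congr rfl fun s _ => by ring
    _ = ∑ s : κ, ∑ t : ι, c * (W s * T t * M s t) := Finset.sum_comm
    _ = c * ∑ s : κ, ∑ t : ι, W s * T t * M s t := by
        rw [Finset.mul_sum]
        exact Finset.sum_congr rfl fun s _ => by rw [Finset.mul_sum]


lemma stepV (A B' C' : MulChar F ℂ) (y : F) (hy : y ≠ 0) (c : F) :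
    ∑ v : F, (B' v * (B'⁻¹ * C') (1 - v)) * A⁻¹ (c - v * y)
      = ((Fintype.card F : ℂ) - 1)⁻¹ *
          ∑ lam : MulChar F ℂ, (∑ b : F, A⁻¹ (c - b) * lam⁻¹ b) *
            ((∑ v : F, (B' v * (B'⁻¹ * C') (1 - v)) * lam v) * lam y) :=
  lemM' (fun b => A⁻¹ (c - b)) (fun v => B' v * (B'⁻¹ * C') (1 - v)) y hy
    (by show B' (0 : F) * (B'⁻¹ * C') (1 - (0 : F)) = 0; rw [map_zero'', zero_mul])

lemma stepU (A B C : MulChar F ℂ) (x : F) (hx : x ≠ 0) (b : F) :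
    ∑ u : F, (B u * (B⁻¹ * C) (1 - u)) * A⁻¹ (1 - u * x - b)
      = ((Fintype.card F : ℂ) - 1)⁻¹ *
          ∑ χ : MulChar F ℂ, (∑ a : F, A⁻¹ (1 - a - b) * χ⁻¹ a) *
            ((∑ u : F, (B u * (B⁻¹ * C) (1 - u)) * χ u) * χ x) :=
  lemM' (fun a => A⁻¹ (1 - a - b)) (fun u => B u * (B⁻¹ * C) (1 - u)) x hx
    (by show B (0 : F) * (B⁻¹ * C) (1 - (0 : F)) = 0; rw [map_zero'', zero_mul])

lemma pushB2 (A B C : MulChar F ℂ) (x : F) (L : F → ℂ) :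
    ∑ u : F, (B u * (B⁻¹ * C) (1 - u)) * ∑ b : F, A⁻¹ (1 - u * x - b) * L b
      = ∑ b : F, L b * ∑ u : F, (B u * (B⁻¹ * C) (1 - u)) * A⁻¹ (1 - u * x - b) :=
  pushB' (fun u => B u * (B⁻¹ * C) (1 - u)) (fun u b => A⁻¹ (1 - u * x - b)) L

lemma negx (A : MulChar F ℂ) (x : F) : A⁻¹ (-x) = A (-1 : F) * A⁻¹ x := by
  rw [show (-x) = (-1 : F) * x from by ring, map_mul, inv_neg_one']


end AF2

set_option maxHeartbeats 1000000 in
open AF2 in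
/-- alternative double-sum representation of the finite-field Appell series F₂. -/
theorem appellF2_eq_double_sum {F : Type*} [Field F] [Fintype F]
    (A B B' C C' : MulChar F ℂ) (x y : F) :
    appellF2 A B B' C C' x y =
      ((Fintype.card F : ℂ) - 1)⁻¹ ^ 2 *
        (∑ χ : MulChar F ℂ, ∑ lam : MulChar F ℂ,
          binom (A * χ) χ * binom (A * χ * lam) lam * binom (B * χ) (C * χ) *
            binom (B' * lam) (C' * lam) * χ x * lam y) +
      A⁻¹ (-x) * C'⁻¹ y * (B'⁻¹ * C') (1 - y) * binom (A⁻¹ * B) (B * C⁻¹) := by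
  classical
  by_cases hx : x = 0
  · subst hx
    simp only [appellF2, zero_mul, map_zero'', neg_zero, mul_zero, zero_add]
    simp [map_zero'']
  by_cases hy : y = 0
  · subst hy
    simp only [appellF2, mul_zero, map_zero'', zero_mul, mul_zero, add_zero]
    simp [map_zero'']
  -- main case
  unfold appellF2
  rw [MulChar.one_apply (isUnit_iff_ne_zero.mpr (mul_ne_zero hx hy)), one_mul]
  have key : (∑ u : F, ∑ v : F,
        B u * B' v * (B⁻¹ * C) (1 - u) * (B'⁻¹ * C') (1 - v) * A⁻¹ (1 - u * x - v * y))
      = ((Fintype.card F : ℂ) - 1)⁻¹ * (((Fintype.card F : ℂ) - 1)⁻¹ *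
          ∑ χ : MulChar F ℂ, ∑ lam : MulChar F ℂ,
            ((B⁻¹ * C) (-1 : F) * binom (B * χ) (C * χ) * χ x) *
              (((B'⁻¹ * C') (-1 : F) * binom (B' * lam) (C' * lam)) * lam y) *
              (binom (A * χ) χ * binom (A * χ * lam) lam
                + A (-1 : F) * (if χ = A⁻¹ then ((Fintype.card F : ℂ) - 1) else 0))) := by
    have t1 : (∑ u : F, ∑ v : F,
          B u * B' v * (B⁻¹ * C) (1 - u) * (B'⁻¹ * C') (1 - v) * A⁻¹ (1 - u * x - v * y))
        = ∑ u : F, (B u * (B⁻¹ * C) (1 - u)) *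
            ∑ v : F, (B' v * (B'⁻¹ * C') (1 - v)) * A⁻¹ (1 - u * x - v * y) := by
      refine Finset.sum_congr rfl fun u _ => ?_
      rw [Finset.mul_sum]
      exact Finset.sum_congr rfl fun v _ => by ring
    rw [t1]
    simp only [stepV A B' C' y hy]
    simp only [pushA']
    simp only [pushB2 A B C x]
    simp only [stepU A B C x hx]
    simp only [pushA']
    simp only [pushD']
    refine congrArg _ (congrArg _ (Finset.sum_congr rfl fun χ _ =>
      Finset.sum_congr rfl fun lam _ => ?_))
    rw [Jg_eq' B C χ, Jg_eq' B' C' lam, c_eq' A χ lam]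
  rw [key]
  have split : ∀ χ lam : MulChar F ℂ,
      (B * B' * C * C') (-1 : F) *
        (((B⁻¹ * C) (-1 : F) * binom (B * χ) (C * χ) * χ x) *
          (((B'⁻¹ * C') (-1 : F) * binom (B' * lam) (C' * lam)) * lam y) *
          (binom (A * χ) χ * binom (A * χ * lam) lam
            + A (-1 : F) * (if χ = A⁻¹ then ((Fintype.card F : ℂ) - 1) else 0)))
      = (binom (A * χ) χ * binom (A * χ * lam) lam * binom (B * χ) (C * χ) *
          binom (B' * lam) (C' * lam) * χ x * lam y)
        + A (-1 : F) * (if χ = A⁻¹ then ((Fintype.card F : ℂ) - 1) else 0) *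
            (binom (B * χ) (C * χ) * χ x * (binom (B' * lam) (C' * lam) * lam y)) := by
    intro χ lam
    have hc := const_one' B B' C C'
    calc (B * B' * C * C') (-1 : F) *
          (((B⁻¹ * C) (-1 : F) * binom (B * χ) (C * χ) * χ x) *
            (((B'⁻¹ * C') (-1 : F) * binom (B' * lam) (C' * lam)) * lam y) *
            (binom (A * χ) χ * binom (A * χ * lam) lam
              + A (-1 : F) * (if χ = A⁻¹ then ((Fintype.card F : ℂ) - 1) else 0)))
        = ((B * B' * C * C') (-1 : F) * (B⁻¹ * C) (-1 : F) * (B'⁻¹ * C') (-1 : F)) *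
            ((binom (B * χ) (C * χ) * χ x) * ((binom (B' * lam) (C' * lam)) * lam y) *
              (binom (A * χ) χ * binom (A * χ * lam) lam
                + A (-1 : F) * (if χ = A⁻¹ then ((Fintype.card F : ℂ) - 1) else 0))) := by ring
      _ = _ := by rw [hc, one_mul]; ring
  calc (B * B' * C * C') (-1 : F) *
        (((Fintype.card F : ℂ) - 1)⁻¹ * (((Fintype.card F : ℂ) - 1)⁻¹ *
          ∑ χ : MulChar F ℂ, ∑ lam : MulChar F ℂ,
            ((B⁻¹ * C) (-1 : F) * binom (B * χ) (C * χ) * χ x) *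
              (((B'⁻¹ * C') (-1 : F) * binom (B' * lam) (C' * lam)) * lam y) *
              (binom (A * χ) χ * binom (A * χ * lam) lam
                + A (-1 : F) * (if χ = A⁻¹ then ((Fintype.card F : ℂ) - 1) else 0))))
      = ((Fintype.card F : ℂ) - 1)⁻¹ ^ 2 *
          ∑ χ : MulChar F ℂ, ∑ lam : MulChar F ℂ,
            ((binom (A * χ) χ * binom (A * χ * lam) lam * binom (B * χ) (C * χ) *
              binom (B' * lam) (C' * lam) * χ x * lam y)
            + A (-1 : F) * (if χ = A⁻¹ then ((Fintype.card F : ℂ) - 1) else 0) *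
                (binom (B * χ) (C * χ) * χ x * (binom (B' * lam) (C' * lam) * lam y))) := by
        rw [show ∀ S : ℂ, (B * B' * C * C') (-1 : F) *
            (((Fintype.card F : ℂ) - 1)⁻¹ * (((Fintype.card F : ℂ) - 1)⁻¹ * S))
            = ((Fintype.card F : ℂ) - 1)⁻¹ ^ 2 * ((B * B' * C * C') (-1 : F) * S)
          from fun S => by ring]
        refine congrArg _ ?_
        rw [Finset.mul_sum]
        refine Finset.sum_congr rfl fun χ _ => ?_
        rw [Finset.mul_sum]
        exact Finset.sum_congr rfl fun lam _ => split χ lam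
    _ = ((Fintype.card F : ℂ) - 1)⁻¹ ^ 2 *
          (∑ χ : MulChar F ℂ, ∑ lam : MulChar F ℂ,
            binom (A * χ) χ * binom (A * χ * lam) lam * binom (B * χ) (C * χ) *
              binom (B' * lam) (C' * lam) * χ x * lam y)
        + ((Fintype.card F : ℂ) - 1)⁻¹ ^ 2 *
          (∑ χ : MulChar F ℂ, ∑ lam : MulChar F ℂ,
            A (-1 : F) * (if χ = A⁻¹ then ((Fintype.card F : ℂ) - 1) else 0) *
              (binom (B * χ) (C * χ) * χ x * (binom (B' * lam) (C' * lam) * lam y))) := by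
        rw [show (∑ χ : MulChar F ℂ, ∑ lam : MulChar F ℂ,
            ((binom (A * χ) χ * binom (A * χ * lam) lam * binom (B * χ) (C * χ) *
              binom (B' * lam) (C' * lam) * χ x * lam y)
            + A (-1 : F) * (if χ = A⁻¹ then ((Fintype.card F : ℂ) - 1) else 0) *
                (binom (B * χ) (C * χ) * χ x * (binom (B' * lam) (C' * lam) * lam y))))
          = (∑ χ : MulChar F ℂ, ∑ lam : MulChar F ℂ,
              binom (A * χ) χ * binom (A * χ * lam) lam * binom (B * χ) (C * χ) *
                binom (B' * lam) (C' * lam) * χ x * lam y)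
            + ∑ χ : MulChar F ℂ, ∑ lam : MulChar F ℂ,
              A (-1 : F) * (if χ = A⁻¹ then ((Fintype.card F : ℂ) - 1) else 0) *
                (binom (B * χ) (C * χ) * χ x * (binom (B' * lam) (C' * lam) * lam y)) from by
          rw [← Finset.sum_add_distrib]
          exact Finset.sum_congr rfl fun χ _ => Finset.sum_add_distrib]
        ring
    _ = ((Fintype.card F : ℂ) - 1)⁻¹ ^ 2 *
          (∑ χ : MulChar F ℂ, ∑ lam : MulChar F ℂ,
            binom (A * χ) χ * binom (A * χ * lam) lam * binom (B * χ) (C * χ) *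
              binom (B' * lam) (C' * lam) * χ x * lam y)
        + A⁻¹ (-x) * C'⁻¹ y * (B'⁻¹ * C') (1 - y) * binom (A⁻¹ * B) (B * C⁻¹) := by
        refine congrArg _ ?_
        have e1 : ∀ χ : MulChar F ℂ,
            (∑ lam : MulChar F ℂ,
              A (-1 : F) * (if χ = A⁻¹ then ((Fintype.card F : ℂ) - 1) else 0) *
                (binom (B * χ) (C * χ) * χ x * (binom (B' * lam) (C' * lam) * lam y)))
            = (if χ = A⁻¹ then
                A (-1 : F) * ((Fintype.card F : ℂ) - 1) * (binom (B * χ) (C * χ) * χ x) *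
                  ∑ lam : MulChar F ℂ, binom (B' * lam) (C' * lam) * lam y
              else 0) := by
          intro χ
          by_cases h : χ = A⁻¹
          · rw [if_pos h]
            simp only [if_pos h]
            rw [Finset.mul_sum]
            exact Finset.sum_congr rfl fun lam _ => by ring
          · simp [if_neg h]
        rw [show (∑ χ : MulChar F ℂ, ∑ lam : MulChar F ℂ,
            A (-1 : F) * (if χ = A⁻¹ then ((Fintype.card F : ℂ) - 1) else 0) *
              (binom (B * χ) (C * χ) * χ x * (binom (B' * lam) (C' * lam) * lam y)))
          = ∑ χ : MulChar F ℂ, (if χ = A⁻¹ then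
              A (-1 : F) * ((Fintype.card F : ℂ) - 1) * (binom (B * χ) (C * χ) * χ x) *
                ∑ lam : MulChar F ℂ, binom (B' * lam) (C' * lam) * lam y
            else 0) from Finset.sum_congr rfl fun χ _ => e1 χ]
        rw [Finset.sum_ite_eq' Finset.univ (A⁻¹ : MulChar F ℂ)]
        simp only [Finset.mem_univ, if_true]
        rw [sumD' B' C' y]
        rw [negx, binom_eq4' A B C]
        calc ((Fintype.card F : ℂ) - 1)⁻¹ ^ 2 *
              (A (-1 : F) * ((Fintype.card F : ℂ) - 1) * (binom (A⁻¹ * B) (B * C⁻¹) * A⁻¹ x) *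
                (((Fintype.card F : ℂ) - 1) * (C'⁻¹ y * (B'⁻¹ * C') (1 - y))))
            = (((Fintype.card F : ℂ) - 1)⁻¹ * ((Fintype.card F : ℂ) - 1)) * (((Fintype.card F : ℂ) - 1)⁻¹ * ((Fintype.card F : ℂ) - 1)) *
                (A (-1 : F) * A⁻¹ x * C'⁻¹ y * (B'⁻¹ * C') (1 - y) *
                  binom (A⁻¹ * B) (B * C⁻¹)) := by ring
          _ = A (-1 : F) * A⁻¹ x * C'⁻¹ y * (B'⁻¹ * C') (1 - y) *
                binom (A⁻¹ * B) (B * C⁻¹) := by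
              rw [inv_mul_cancel₀ hq1']
              ring
  done
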